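/- (Hochschild–Kostant–Rosenberg cocycle property.) Let A be a commutative algebra over a field k of characteristic 0 and let ξ_1,…,ξ_n be k-linear derivations of A. Then the Hochschild cochain φ_HKR(ξ_1∧…∧ξ_n) ∈ C^n(A,A) defined by φ_HKR(ξ_1∧…∧ξ_n)(f_1⊗…⊗f_n) = (1/n!)·Σ_{σ∈S_n} sgn(σ)·Π_{i=1}^n ξ_{σ(i)}(f_i) is a Hochschild cocycle: d(φ_HKR(ξ_1∧…∧ξ_n)) = 0. -/
import Mathlib


/-- The (non-symmetrized) Gerstenhaber composition `φ₁ ∘ φ₂` of Hochschild cochains: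
for `φ₁` of degree `k₁` (i.e. a `(k₁+1)`-cochain) and `φ₂` of degree `k₂`,
`(φ₁ ∘ φ₂)(a₀ ⊗ … ⊗ a_{k₁+k₂}) =
  ∑_{i=0}^{k₁} (-1)^{i k₂} φ₁(a₀ ⊗ … ⊗ a_{i-1} ⊗ φ₂(a_i ⊗ … ⊗ a_{i+k₂}) ⊗ … ⊗ a_{k₁+k₂})`. -/
def gcomp {A : Type*} [AddCommGroup A] (k1 k2 : ℕ)
    (f : (Fin (k1 + 1) → A) → A) (g : (Fin (k2 + 1) → A) → A) :
    (Fin (k1 + k2 + 1) → A) → A := fun a =>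
  ∑ i : Fin (k1 + 1), ((-1 : ℤ) ^ ((i : ℕ) * k2)) •
    f (fun j => if _ : (j : ℕ) < (i : ℕ) then a ⟨j, by omega⟩
      else if _ : (j : ℕ) = (i : ℕ) then g (fun l => a ⟨(i : ℕ) + (l : ℕ), by omega⟩)
      else a ⟨(j : ℕ) + k2, by omega⟩)

/-- The Gerstenhaber bracket `[φ₁, φ₂] = φ₁ ∘ φ₂ - (-1)^{k₁ k₂} φ₂ ∘ φ₁` of Hochschild
cochains. -/
def gbracket {A : Type*} [AddCommGroup A] (k1 k2 : ℕ)
    (f : (Fin (k1 + 1) → A) → A) (g : (Fin (k2 + 1) → A) → A) :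
    (Fin (k1 + k2 + 1) → A) → A := fun a =>
  gcomp k1 k2 f g a - ((-1 : ℤ) ^ (k1 * k2)) •
    gcomp k2 k1 g f (fun j => a (Fin.cast (by omega) j))

/-- The Hochschild cochain differential: for a `n`-cochain `f`,
`(d f)(a₀ ⊗ … ⊗ a_n) = a₀ · f(a₁ ⊗ … ⊗ a_n)
  + ∑_{i=1}^{n} (-1)^i f(a₀ ⊗ … ⊗ a_{i-1}·a_i ⊗ … ⊗ a_n)
  + (-1)^{n+1} f(a₀ ⊗ … ⊗ a_{n-1}) · a_n`  (indices shifted to start from 0). -/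
def hd {A : Type*} [Ring A] (n : ℕ) (f : (Fin n → A) → A) : (Fin (n + 1) → A) → A := fun a =>
  a 0 * f (fun j => a j.succ)
    + ∑ i : Fin n, ((-1 : ℤ) ^ ((i : ℕ) + 1)) •
        f (fun j => if _ : (j : ℕ) < (i : ℕ) then a ⟨j, by omega⟩
          else if _ : (j : ℕ) = (i : ℕ) then a ⟨i, by omega⟩ * a ⟨(i : ℕ) + 1, by omega⟩
          else a ⟨(j : ℕ) + 1, by omega⟩)
    + ((-1 : ℤ) ^ (n + 1)) • (f (fun j => a j.castSucc) * a (Fin.last n))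

/-- STATEMENT 10 (HKR cocycle property): for a commutative algebra `A` over a field `K` of
characteristic `0` and `K`-linear derivations `ξ₁,…,ξ_n` of `A`, the antisymmetrized
Hochschild cochain
`φ_HKR(ξ₁ ∧ … ∧ ξ_n)(f₁ ⊗ … ⊗ f_n) = (1/n!) ∑_{σ ∈ S_n} sgn(σ) ∏ᵢ ξ_{σ(i)}(fᵢ)`
is a Hochschild cocycle: `d(φ_HKR(ξ₁ ∧ … ∧ ξ_n)) = 0`. -/
lemma hd_prod_deriv {K A : Type*} [CommRing K] [CommRing A] [Algebra K A]
    (n : ℕ) (η : Fin n → Derivation K A A) (a : Fin (n + 1) → A) :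
    hd n (fun f : Fin n → A => ∏ i : Fin n, η i (f i)) a = 0 := by
  classical
  set S : Fin (n + 1) → A := fun i =>
    a i * ∏ j : Fin n, (if (j : ℕ) < (i : ℕ) then η j (a j.castSucc) else η j (a j.succ))
    with hS
  have h0 : a 0 * ∏ j : Fin n, η j (a j.succ) = S 0 := by
    simp [hS]
  have hlast : (∏ j : Fin n, η j (a j.castSucc)) * a (Fin.last n) = S (Fin.last n) := by
    simp only [hS, Fin.val_last]
    rw [mul_comm]
    congr 1
    exact Finset.prod_congr rfl fun j _ => by simp [j.isLt]
  have hmid : ∀ i : Fin n,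
      (∏ j : Fin n, η j (if _ : (j : ℕ) < (i : ℕ) then a ⟨j, by omega⟩
        else if _ : (j : ℕ) = (i : ℕ) then a ⟨(i : ℕ), by omega⟩ * a ⟨(i : ℕ) + 1, by omega⟩
        else a ⟨(j : ℕ) + 1, by omega⟩))
      = S i.castSucc + S i.succ := by
    intro i
    set c : Fin n → A := fun j =>
      η j (if _ : (j : ℕ) < (i : ℕ) then a ⟨j, by omega⟩
        else if _ : (j : ℕ) = (i : ℕ) then a ⟨(i : ℕ), by omega⟩ * a ⟨(i : ℕ) + 1, by omega⟩
        else a ⟨(j : ℕ) + 1, by omega⟩) with hc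
    have hci : c i = η i (a i.castSucc) * a i.succ + a i.castSucc * η i (a i.succ) := by
      have : c i = η i (a i.castSucc * a i.succ) := by
        simp only [hc, dif_neg (lt_irrefl (i : ℕ)), dif_pos rfl]
        rfl
      rw [this, Derivation.leibniz]
      simp only [smul_eq_mul]
      ring
    have hPe : ∀ j : Fin n, j ≠ i →
        ((if (j : ℕ) < ((i.castSucc : Fin (n+1)) : ℕ) then η j (a j.castSucc) else η j (a j.succ)) = c j) := by
      intro j hj
      have hj' : (j : ℕ) ≠ (i : ℕ) := fun h => hj (Fin.ext h)
      simp only [hc, Fin.coe_castSucc]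
      rcases lt_or_gt_of_ne hj' with h | h
      · simp only [if_pos h, dif_pos h]
        rfl
      · simp only [if_neg (Nat.lt_asymm h), dif_neg (Nat.lt_asymm h), dif_neg hj']
        rfl
    have hPd : ∀ j : Fin n, j ≠ i →
        ((if (j : ℕ) < ((i.succ : Fin (n+1)) : ℕ) then η j (a j.castSucc) else η j (a j.succ)) = c j) := by
      intro j hj
      have hj' : (j : ℕ) ≠ (i : ℕ) := fun h => hj (Fin.ext h)
      simp only [hc, Fin.val_succ]
      rcases lt_or_gt_of_ne hj' with h | h
      · simp only [if_pos (Nat.lt_succ_of_lt h), dif_pos h]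
        rfl
      · have h1 : ¬ (j : ℕ) < (i : ℕ) + 1 := by omega
        have h2 : ¬ (j : ℕ) < (i : ℕ) := by omega
        simp only [if_neg h1, dif_neg h2, dif_neg hj']
        rfl
    have key : ∀ (b : Fin (n+1)) (x : A), (∀ j : Fin n, j ≠ i →
        ((if (j : ℕ) < (b : ℕ) then η j (a j.castSucc) else η j (a j.succ)) = c j)) →
        (if (i : ℕ) < (b : ℕ) then η i (a i.castSucc) else η i (a i.succ)) = x →
        S b = a b * (x * ∏ j ∈ Finset.univ.erase i, c j) := by
      intro b x hbe hbi
      simp only [hS]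
      congr 1
      rw [← Finset.mul_prod_erase Finset.univ _ (Finset.mem_univ i), hbi]
      congr 1
      exact Finset.prod_congr rfl fun j hj => hbe j (Finset.ne_of_mem_erase hj)
    have hSe : S i.castSucc = a i.castSucc * (η i (a i.succ) * ∏ j ∈ Finset.univ.erase i, c j) :=
      key i.castSucc _ hPe (by simp)
    have hSd : S i.succ = a i.succ * (η i (a i.castSucc) * ∏ j ∈ Finset.univ.erase i, c j) :=
      key i.succ _ hPd (by simp)
    rw [← Finset.mul_prod_erase Finset.univ c (Finset.mem_univ i), hci, hSe, hSd]
    ring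
  -- now assemble
  simp only [hd]
  rw [h0, hlast]
  have : ∑ i : Fin n, ((-1 : ℤ) ^ ((i : ℕ) + 1)) •
      (∏ j : Fin n, η j (if _ : (j : ℕ) < (i : ℕ) then a ⟨j, by omega⟩
        else if _ : (j : ℕ) = (i : ℕ) then a ⟨(i : ℕ), by omega⟩ * a ⟨(i : ℕ) + 1, by omega⟩
        else a ⟨(j : ℕ) + 1, by omega⟩))
      = ((-1 : ℤ) ^ n) • S (Fin.last n) - S 0 := by
    set G : ℕ → A := fun i => if h : i < n + 1 then ((-1 : ℤ) ^ i) • S ⟨i, h⟩ else 0 with hG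
    have step : ∀ i : Fin n, ((-1 : ℤ) ^ ((i : ℕ) + 1)) •
        (∏ j : Fin n, η j (if _ : (j : ℕ) < (i : ℕ) then a ⟨j, by omega⟩
          else if _ : (j : ℕ) = (i : ℕ) then a ⟨(i : ℕ), by omega⟩ * a ⟨(i : ℕ) + 1, by omega⟩
          else a ⟨(j : ℕ) + 1, by omega⟩))
        = G ((i : ℕ) + 1) - G (i : ℕ) := by
      intro i
      rw [hmid i]
      have h1 : ((i : ℕ)) < n + 1 := by omega
      have h2 : ((i : ℕ) + 1) < n + 1 := by omega
      simp only [hG, dif_pos h1, dif_pos h2]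
      have e1 : (⟨(i : ℕ), h1⟩ : Fin (n+1)) = i.castSucc := rfl
      have e2 : (⟨(i : ℕ) + 1, h2⟩ : Fin (n+1)) = i.succ := rfl
      rw [e1, e2, pow_succ, smul_add]
      rw [mul_smul, mul_smul]
      simp [neg_smul]
      abel
    rw [Finset.sum_congr rfl fun i _ => step i]
    rw [Fin.sum_univ_eq_sum_range (fun i => G (i + 1) - G i) n]
    rw [Finset.sum_range_sub G]
    have hGn : G n = ((-1 : ℤ) ^ n) • S (Fin.last n) := by
      simp only [hG, dif_pos (Nat.lt_succ_self n)]
      rfl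
    have hG0 : G 0 = S 0 := by simp [hG]
    rw [hGn, hG0]
  rw [this]
  rw [pow_succ]
  simp [mul_smul]

lemma hd_smulG {A : Type*} [Ring A] {M : Type*} [Monoid M] [DistribMulAction M A]
    [SMulCommClass M A A] [SMulCommClass ℤ M A] [IsScalarTower M A A]
    (n : ℕ) (c : M) (g : (Fin n → A) → A) (a : Fin (n + 1) → A) :
    hd n (fun f => c • g f) a = c • hd n g a := by
  simp only [hd, mul_smul_comm, smul_mul_assoc, smul_comm _ c, Finset.smul_sum, smul_add]

lemma hd_sum {A : Type*} [Ring A] {ι : Type*} (s : Finset ι) (n : ℕ)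
    (g : ι → (Fin n → A) → A) (a : Fin (n + 1) → A) :
    hd n (fun f => ∑ σ ∈ s, g σ f) a = ∑ σ ∈ s, hd n (g σ) a := by
  simp only [hd, Finset.mul_sum, Finset.sum_mul, Finset.smul_sum]
  rw [Finset.sum_comm]
  simp [Finset.sum_add_distrib]


theorem hkr_cocycle {K A : Type*} [Field K] [CharZero K] [CommRing A] [Algebra K A]
    (n : ℕ) (ξ : Fin n → Derivation K A A) (a : Fin (n + 1) → A) :
    hd n (fun f : Fin n → A =>
      ((n.factorial : K)⁻¹) •
        ∑ σ : Equiv.Perm (Fin n), ((Equiv.Perm.sign σ : ℤ) • ∏ i : Fin n, ξ (σ i) (f i))) a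
      = 0 := by
  rw [hd_smulG n ((n.factorial : K)⁻¹)
    (fun f => ∑ σ : Equiv.Perm (Fin n), ((Equiv.Perm.sign σ : ℤ) • ∏ i : Fin n, ξ (σ i) (f i))) a]
  rw [hd_sum Finset.univ n
    (fun σ f => ((Equiv.Perm.sign σ : ℤ) • ∏ i : Fin n, ξ (σ i) (f i))) a]
  have : ∀ σ : Equiv.Perm (Fin n),
      hd n (fun f => ((Equiv.Perm.sign σ : ℤ) • ∏ i : Fin n, ξ (σ i) (f i))) a = 0 := by
    intro σ
    rw [hd_smulG n ((Equiv.Perm.sign σ : ℤ))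
      (fun f => ∏ i : Fin n, ξ (σ i) (f i)) a]
    rw [hd_prod_deriv n (fun i => ξ (σ i)) a, smul_zero]
  rw [Finset.sum_eq_zero fun σ _ => this σ, smul_zero]
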